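/- Let σ be an exceptional permutation. If 3 ≤ m ≤ |σ|, then σ has a simple pattern of size m if and only if m is even. -/

import Mathlib

open Equiv Filter Asymptotics

/-- `π` (of size `k`) is a pattern of `σ` (of size `n`): there is a strictly increasing
sequence of positions of `σ` whose values are order-isomorphic to `π`. -/
def IsPattern {k n : ℕ} (π : Equiv.Perm (Fin k)) (σ : Equiv.Perm (Fin n)) : Prop :=
  ∃ f : Fin k ↪o Fin n, ∀ i j : Fin k, π i < π j ↔ σ (f i) < σ (f j)

/-- A set of positions is consecutive (an integer interval). -/
def IsConsecutive {n : ℕ} (s : Finset (Fin n)) : Prop :=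
  ∀ ⦃i j k : Fin n⦄, i ∈ s → k ∈ s → i ≤ j → j ≤ k → j ∈ s

/-- An interval of a permutation: a consecutive set of positions whose image is
a consecutive set of values. -/
def IsPermInterval {n : ℕ} (σ : Equiv.Perm (Fin n)) (s : Finset (Fin n)) : Prop :=
  IsConsecutive s ∧ IsConsecutive (s.image σ)

/-- A permutation is simple if its only intervals are the trivial ones. -/
def IsSimple {n : ℕ} (σ : Equiv.Perm (Fin n)) : Prop :=
  ∀ s : Finset (Fin n), IsPermInterval σ s → s.card ≤ 1 ∨ s = Finset.univ

/-- Value at (0-indexed) position `i` of the exceptional permutation of size `2*m`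
of type `t` (0-indexed types: paper's types 1,2,3,4 are `t = 0,1,2,3`). -/
def exceptionalValue (t : Fin 4) (m i : ℕ) : ℕ :=
  if t = 0 then (if i < m then 2 * i + 1 else 2 * (i - m))
  else if t = 1 then (if i < m then 2 * (m - i - 1) else 2 * (2 * m - i) - 1)
  else if t = 2 then (if i % 2 = 0 then m + i / 2 else i / 2)
  else (if i % 2 = 0 then m - i / 2 - 1 else 2 * m - i / 2 - 1)

/-- `σ` is the exceptional permutation of type `t` (of its size). -/
def IsExceptionalOfType {n : ℕ} (t : Fin 4) (σ : Equiv.Perm (Fin n)) : Prop :=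
  ∃ m : ℕ, 2 ≤ m ∧ n = 2 * m ∧ ∀ i : Fin n, (σ i : ℕ) = exceptionalValue t m (i : ℕ)

/-- `σ` is exceptional. -/
def IsExceptional {n : ℕ} (σ : Equiv.Perm (Fin n)) : Prop :=
  ∃ t : Fin 4, IsExceptionalOfType t σ

/-- `τ` is the permutation obtained from `σ` by deleting the point at position `i`
(and renormalizing). -/
def IsDeletion {n : ℕ} (σ : Equiv.Perm (Fin (n + 1))) (i : Fin (n + 1))
    (τ : Equiv.Perm (Fin n)) : Prop :=
  ∀ j k : Fin n, τ j < τ k ↔ σ (i.succAbove j) < σ (i.succAbove k)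

/-- The permutation 2413. -/
def p2413 : Equiv.Perm (Fin 4) := ⟨![1, 3, 0, 2], ![2, 0, 3, 1], by decide, by decide⟩

/-- The permutation 3142. -/
def p3142 : Equiv.Perm (Fin 4) := ⟨![2, 0, 3, 1], ![1, 3, 0, 2], by decide, by decide⟩

/-- The number of simple permutations of size `n`. -/
noncomputable def simpleCount (n : ℕ) : ℕ :=
  Nat.card {σ : Equiv.Perm (Fin n) // IsSimple σ}

/-- The average outdegree `D_n = s_{n-1} · n(n-4) / s_n`. -/
noncomputable def avgOutdeg (n : ℕ) : ℝ :=
  (simpleCount (n - 1) : ℝ) * ((n : ℝ) * ((n : ℝ) - 4)) / (simpleCount n : ℝ)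

/-- The outdegree of a permutation: the number of positions whose deletion
yields a simple permutation. -/
noncomputable def outdeg : ∀ {n : ℕ}, Equiv.Perm (Fin n) → ℕ
  | 0, _ => 0
  | _ + 1, σ =>
    Nat.card {i // ∃ τ, IsDeletion σ i τ ∧ IsSimple τ}

/-- `S_n^k`: the number of simple permutations of size `n` with outdegree `k`. -/
noncomputable def outdegCount (n k : ℕ) : ℕ :=
  Nat.card {σ : Equiv.Perm (Fin n) // IsSimple σ ∧ outdeg σ = k}

-- ===================== general interval lemmas =====================

lemma pair_not_simple {m : ℕ} (hm : 3 ≤ m) (π : Equiv.Perm (Fin m)) (l l' : Fin m)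
    (hll' : (l' : ℕ) = (l : ℕ) + 1) (hlt : π l < π l')
    (hmid : ∀ x, π l < π x → π x < π l' → False) : ¬ IsSimple π := by
  intro hs
  have hne : l ≠ l' := by intro h; rw [h] at hll'; omega
  have key : IsPermInterval π {l, l'} := by
    constructor
    · intro i j k hi hk hij hjk
      simp only [Finset.mem_insert, Finset.mem_singleton] at hi hk ⊢
      have h1 : (i : ℕ) ≤ (j : ℕ) := hij
      have h2 : (j : ℕ) ≤ (k : ℕ) := hjk
      have hjv : (j : ℕ) = (l : ℕ) ∨ (j : ℕ) = (l' : ℕ) := by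
        rcases hi with rfl | rfl <;> rcases hk with rfl | rfl <;> omega
      rcases hjv with h | h
      · left; exact Fin.ext h
      · right; exact Fin.ext h
    · rw [Finset.image_insert, Finset.image_singleton]
      intro i j k hi hk hij hjk
      simp only [Finset.mem_insert, Finset.mem_singleton] at hi hk ⊢
      rcases hi with rfl | rfl <;> rcases hk with rfl | rfl
      · left; exact le_antisymm hjk hij
      · by_cases hx : π l < π (π.symm j)
        · by_cases hy : π (π.symm j) < π l'
          · exact absurd (hmid _ hx hy) not_false
          · right
            have : π l' ≤ π (π.symm j) := not_lt.mp hy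
            rw [Equiv.apply_symm_apply] at this hx
            exact le_antisymm hjk this
        · left
          have : π (π.symm j) ≤ π l := not_lt.mp hx
          rw [Equiv.apply_symm_apply] at this
          exact le_antisymm this hij
      · exact absurd (le_trans hij hjk) (not_le.mpr hlt)
      · right; exact le_antisymm hjk hij
  rcases hs _ key with h | h
  · rw [Finset.card_insert_of_notMem (by simpa using hne), Finset.card_singleton] at h
    omega
  · have hcc := congrArg Finset.card h
    rw [Finset.card_insert_of_notMem (by simpa using hne), Finset.card_singleton,
      Finset.card_univ, Fintype.card_fin] at hcc
    omega

lemma min_not_simple {m : ℕ} (hm : 3 ≤ m) (π : Equiv.Perm (Fin m)) (z : Fin m)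
    (hz : (z : ℕ) = 0) (hmin : ∀ x, π z ≤ π x) : ¬ IsSimple π := by
  intro hs
  have h0 : (0 : ℕ) < m := by omega
  have hπz : π z = ⟨0, h0⟩ := by
    refine le_antisymm ?_ (by simp [Fin.le_def])
    simpa using hmin (π.symm ⟨0, h0⟩)
  have key : IsPermInterval π (Finset.univ.erase z) := by
    constructor
    · intro i j k hi _ hij _
      rw [Finset.mem_erase] at hi ⊢
      refine ⟨?_, Finset.mem_univ _⟩
      intro hjz
      apply hi.1
      apply Fin.ext
      have h1 : (i : ℕ) ≤ (j : ℕ) := hij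
      have h2 : (j : ℕ) = 0 := by rw [hjz, hz]
      omega
    · have himg : (Finset.univ.erase z).image π = Finset.univ.erase ⟨0, h0⟩ := by
        ext x
        simp only [Finset.mem_image, Finset.mem_erase, Finset.mem_univ, and_true]
        constructor
        · rintro ⟨y, hy, rfl⟩
          rw [← hπz]
          exact fun h => hy (π.injective h)
        · intro hx
          refine ⟨π.symm x, ?_, Equiv.apply_symm_apply _ _⟩
          intro h
          apply hx
          rw [← hπz, ← h, Equiv.apply_symm_apply]
      rw [himg]
      intro i j k hi _ hij _
      rw [Finset.mem_erase] at hi ⊢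
      refine ⟨?_, Finset.mem_univ _⟩
      intro hjz
      apply hi.1
      apply Fin.ext
      have h1 : (i : ℕ) ≤ (j : ℕ) := hij
      have h2 : (j : ℕ) = 0 := by rw [hjz]
      omega
  rcases hs _ key with h | h
  · rw [Finset.card_erase_of_mem (Finset.mem_univ _), Finset.card_univ, Fintype.card_fin] at h
    omega
  · have hmem : z ∈ Finset.univ.erase z := by rw [h]; exact Finset.mem_univ z
    exact (Finset.notMem_erase _ _) hmem

lemma max_not_simple {m : ℕ} (hm : 3 ≤ m) (π : Equiv.Perm (Fin m)) (z : Fin m)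
    (hz : (z : ℕ) + 1 = m) (hmax : ∀ x, π x ≤ π z) : ¬ IsSimple π := by
  intro hs
  have h0 : m - 1 < m := by omega
  have hπz : π z = ⟨m - 1, h0⟩ := by
    refine le_antisymm (by simp [Fin.le_def]; omega) ?_
    simpa using hmax (π.symm ⟨m - 1, h0⟩)
  have key : IsPermInterval π (Finset.univ.erase z) := by
    constructor
    · intro i j k _ hk _ hjk
      rw [Finset.mem_erase] at hk ⊢
      refine ⟨?_, Finset.mem_univ _⟩
      intro hjz
      apply hk.1
      apply Fin.ext
      have h1 : (j : ℕ) ≤ (k : ℕ) := hjk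
      have h2 : (j : ℕ) = m - 1 := by rw [hjz]; omega
      have := k.isLt
      omega
    · have himg : (Finset.univ.erase z).image π = Finset.univ.erase ⟨m - 1, h0⟩ := by
        ext x
        simp only [Finset.mem_image, Finset.mem_erase, Finset.mem_univ, and_true]
        constructor
        · rintro ⟨y, hy, rfl⟩
          rw [← hπz]
          exact fun h => hy (π.injective h)
        · intro hx
          refine ⟨π.symm x, ?_, Equiv.apply_symm_apply _ _⟩
          intro h
          apply hx
          rw [← hπz, ← h, Equiv.apply_symm_apply]
      rw [himg]
      intro i j k _ hk _ hjk
      rw [Finset.mem_erase] at hk ⊢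
      refine ⟨?_, Finset.mem_univ _⟩
      intro hjz
      apply hk.1
      apply Fin.ext
      have h1 : (j : ℕ) ≤ (k : ℕ) := hjk
      have h2 : (j : ℕ) = m - 1 := by rw [hjz]
      have := k.isLt
      omega
  rcases hs _ key with h | h
  · rw [Finset.card_erase_of_mem (Finset.mem_univ _), Finset.card_univ, Fintype.card_fin] at h
    omega
  · have hmem : z ∈ Finset.univ.erase z := by rw [h]; exact Finset.mem_univ z
    exact (Finset.notMem_erase _ _) hmem

-- ===================== transfer lemmas =====================

lemma isConsecutive_rev {n : ℕ} {t : Finset (Fin n)} (h : IsConsecutive t) :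
    IsConsecutive (t.image Fin.rev) := by
  intro i j k hi hk hij hjk
  simp only [Finset.mem_image] at hi hk ⊢
  obtain ⟨a, ha, rfl⟩ := hi
  obtain ⟨b, hb, rfl⟩ := hk
  refine ⟨j.rev, h hb ha ?_ ?_, Fin.rev_rev j⟩
  · rw [← Fin.rev_rev b]; exact Fin.rev_le_rev.mpr hjk
  · rw [← Fin.rev_rev a]; exact Fin.rev_le_rev.mpr hij

lemma image_revPerm_mul {n : ℕ} (σ : Equiv.Perm (Fin n)) (s : Finset (Fin n)) :
    s.image ⇑(Fin.revPerm * σ : Equiv.Perm (Fin n)) = (s.image ⇑σ).image Fin.rev := by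
  rw [Finset.image_image]
  rfl

lemma isSimple_revPerm_mul {n : ℕ} {σ : Equiv.Perm (Fin n)} (h : IsSimple σ) :
    IsSimple (Fin.revPerm * σ) := by
  intro s hs
  apply h s
  refine ⟨hs.1, ?_⟩
  have h2 := hs.2
  rw [image_revPerm_mul] at h2
  have h3 := isConsecutive_rev h2
  rw [Finset.image_image] at h3
  have h4 : (Fin.rev ∘ Fin.rev : Fin n → Fin n) = id := by funext x; simp [Fin.rev_rev]
  rwa [h4, Finset.image_id] at h3

lemma isPattern_revPerm_mul {k n : ℕ} {π : Equiv.Perm (Fin k)} {σ : Equiv.Perm (Fin n)}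
    (h : IsPattern π σ) : IsPattern (Fin.revPerm * π) (Fin.revPerm * σ) := by
  obtain ⟨f, hf⟩ := h
  refine ⟨f, fun i j => ?_⟩
  simp only [Equiv.Perm.mul_apply, Fin.revPerm_apply, Fin.rev_lt_rev]
  exact hf j i

lemma revPerm_mul_revPerm_mul {n : ℕ} (σ : Equiv.Perm (Fin n)) :
    Fin.revPerm * (Fin.revPerm * σ) = σ := by
  ext x
  simp [Equiv.Perm.mul_apply, Fin.rev_rev]

lemma isSimple_inv {n : ℕ} {σ : Equiv.Perm (Fin n)} (h : IsSimple σ) : IsSimple σ⁻¹ := by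
  intro s hs
  have hinv : ⇑(σ⁻¹ : Equiv.Perm (Fin n)) = ⇑σ.symm := rfl
  have himg : (s.image ⇑σ.symm).image ⇑σ = s := by
    rw [Finset.image_image]
    have hcomp : (⇑σ ∘ ⇑σ.symm : Fin n → Fin n) = id := by
      funext x; simp
    rw [hcomp, Finset.image_id]
  have hcons : IsConsecutive (s.image ⇑σ.symm) := by
    have := hs.2; rwa [hinv] at this
  have h2 : IsPermInterval σ (s.image ⇑σ.symm) := ⟨hcons, by rw [himg]; exact hs.1⟩
  rcases h _ h2 with h3 | h3
  · left; rwa [Finset.card_image_of_injective _ (Equiv.injective _)] at h3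
  · right
    have h5 := congrArg (fun t => Finset.image ⇑σ t) h3
    rw [himg] at h5
    rw [h5]
    apply Finset.eq_univ_iff_forall.mpr
    intro x
    simp only [Finset.mem_image]
    exact ⟨σ.symm x, Finset.mem_univ _, by simp⟩

lemma isPattern_inv {k n : ℕ} {π : Equiv.Perm (Fin k)} {σ : Equiv.Perm (Fin n)}
    (h : IsPattern π σ) : IsPattern π⁻¹ σ⁻¹ := by
  obtain ⟨f, hf⟩ := h
  refine ⟨OrderEmbedding.ofStrictMono (fun a => σ (f (π⁻¹ a))) ?_, fun i j => ?_⟩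
  · intro a b hab
    have h1 : π (π⁻¹ a) < π (π⁻¹ b) := by simpa using hab
    exact (hf _ _).mp h1
  · show π⁻¹ i < π⁻¹ j ↔ (σ⁻¹ : Equiv.Perm (Fin n)) (σ (f (π⁻¹ i))) <
      (σ⁻¹ : Equiv.Perm (Fin n)) (σ (f (π⁻¹ j)))
    rw [show (σ⁻¹ : Equiv.Perm (Fin n)) (σ (f (π⁻¹ i))) = f (π⁻¹ i) by simp,
        show (σ⁻¹ : Equiv.Perm (Fin n)) (σ (f (π⁻¹ j))) = f (π⁻¹ j) by simp]
    exact (OrderEmbedding.lt_iff_lt f).symm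

lemma exists_pattern_rev_iff {n m : ℕ} (σ : Equiv.Perm (Fin n)) :
    (∃ π : Equiv.Perm (Fin m), IsSimple π ∧ IsPattern π σ) ↔
      (∃ π : Equiv.Perm (Fin m), IsSimple π ∧ IsPattern π (Fin.revPerm * σ)) := by
  constructor
  · rintro ⟨π, h1, h2⟩
    exact ⟨Fin.revPerm * π, isSimple_revPerm_mul h1, isPattern_revPerm_mul h2⟩
  · rintro ⟨π, h1, h2⟩
    refine ⟨Fin.revPerm * π, isSimple_revPerm_mul h1, ?_⟩
    have := isPattern_revPerm_mul h2
    rwa [revPerm_mul_revPerm_mul] at this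

lemma exists_pattern_inv_iff {n m : ℕ} (σ : Equiv.Perm (Fin n)) :
    (∃ π : Equiv.Perm (Fin m), IsSimple π ∧ IsPattern π σ) ↔
      (∃ π : Equiv.Perm (Fin m), IsSimple π ∧ IsPattern π σ⁻¹) := by
  constructor
  · rintro ⟨π, h1, h2⟩
    exact ⟨π⁻¹, isSimple_inv h1, isPattern_inv h2⟩
  · rintro ⟨π, h1, h2⟩
    refine ⟨π⁻¹, isSimple_inv h1, ?_⟩
    have := isPattern_inv h2
    rwa [inv_inv] at this

-- exceptionalValue unfolding lemmas
lemma eV0_eq (M i : ℕ) : exceptionalValue 0 M i = if i < M then 2 * i + 1 else 2 * (i - M) := by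
  simp [exceptionalValue]

lemma eV1_eq (M i : ℕ) :
    exceptionalValue 1 M i = if i < M then 2 * (M - i - 1) else 2 * (2 * M - i) - 1 := by
  simp [exceptionalValue]

lemma eV2_eq (M i : ℕ) :
    exceptionalValue 2 M i = if i % 2 = 0 then M + i / 2 else i / 2 := by
  simp [exceptionalValue]

lemma eV3_eq (M i : ℕ) :
    exceptionalValue 3 M i = if i % 2 = 0 then M - i / 2 - 1 else 2 * M - i / 2 - 1 := by
  simp [exceptionalValue]

lemma exc_compl_one {n : ℕ} {σ : Equiv.Perm (Fin n)} (h : IsExceptionalOfType 1 σ) :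
    IsExceptionalOfType 0 (Fin.revPerm * σ) := by
  obtain ⟨M, hM, hn, hv⟩ := h
  refine ⟨M, hM, hn, fun i => ?_⟩
  have hval := hv i
  have hlt := (σ i).isLt
  have hilt := i.isLt
  simp only [Equiv.Perm.mul_apply, Fin.revPerm_apply, Fin.val_rev]
  rw [eV0_eq]
  rw [eV1_eq] at hval
  split_ifs with hcase
  · rw [if_pos hcase] at hval; omega
  · rw [if_neg hcase] at hval; omega

lemma exc_compl_three {n : ℕ} {σ : Equiv.Perm (Fin n)} (h : IsExceptionalOfType 3 σ) :
    IsExceptionalOfType 2 (Fin.revPerm * σ) := by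
  obtain ⟨M, hM, hn, hv⟩ := h
  refine ⟨M, hM, hn, fun i => ?_⟩
  have hval := hv i
  have hlt := (σ i).isLt
  have hilt := i.isLt
  simp only [Equiv.Perm.mul_apply, Fin.revPerm_apply, Fin.val_rev]
  rw [eV2_eq]
  rw [eV3_eq] at hval
  split_ifs with hcase
  · rw [if_pos hcase] at hval; omega
  · rw [if_neg hcase] at hval; omega

lemma exc_inv_two {n : ℕ} {σ : Equiv.Perm (Fin n)} (h : IsExceptionalOfType 2 σ) :
    IsExceptionalOfType 0 σ⁻¹ := by
  obtain ⟨M, hM, hn, hv⟩ := h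
  refine ⟨M, hM, hn, fun i => ?_⟩
  have hilt := i.isLt
  have hbound : exceptionalValue 0 M (i : ℕ) < n := by
    rw [eV0_eq]; split_ifs <;> omega
  have hkey : σ ⟨exceptionalValue 0 M (i : ℕ), hbound⟩ = i := by
    apply Fin.ext
    rw [hv]
    simp only
    rw [eV2_eq, eV0_eq]
    split_ifs with h1 h2 h2 <;> omega
  have heq : (σ⁻¹ : Equiv.Perm (Fin n)) i = ⟨exceptionalValue 0 M (i : ℕ), hbound⟩ := by
    rw [Equiv.Perm.inv_def, Equiv.symm_apply_eq]
    exact hkey.symm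
  rw [heq]

lemma exists_type0 {n : ℕ} {σ : Equiv.Perm (Fin n)} (h : IsExceptional σ) (m : ℕ) :
    ∃ σ' : Equiv.Perm (Fin n), IsExceptionalOfType 0 σ' ∧
      ((∃ π : Equiv.Perm (Fin m), IsSimple π ∧ IsPattern π σ) ↔
        (∃ π : Equiv.Perm (Fin m), IsSimple π ∧ IsPattern π σ')) := by
  obtain ⟨t, ht⟩ := h
  fin_cases t
  · exact ⟨σ, ht, Iff.rfl⟩
  · exact ⟨Fin.revPerm * σ, exc_compl_one ht, exists_pattern_rev_iff σ⟩
  · exact ⟨σ⁻¹, exc_inv_two ht, exists_pattern_inv_iff σ⟩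
  · exact ⟨(Fin.revPerm * σ)⁻¹, exc_inv_two (exc_compl_three ht),
      (exists_pattern_rev_iff σ).trans (exists_pattern_inv_iff _)⟩

-- ===================== type-0 exceptional pattern of even size =====================

def excPerm (k : ℕ) : Equiv.Perm (Fin (k + k)) where
  toFun i := ⟨if (i : ℕ) < k then 2 * (i : ℕ) + 1 else 2 * ((i : ℕ) - k),
    by have := i.isLt; split <;> omega⟩
  invFun j := ⟨if (j : ℕ) % 2 = 1 then (j : ℕ) / 2 else k + (j : ℕ) / 2,
    by have := j.isLt; split <;> omega⟩
  left_inv i := by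
    have := i.isLt
    apply Fin.ext
    simp only
    split_ifs <;> omega
  right_inv j := by
    have := j.isLt
    apply Fin.ext
    simp only
    split_ifs <;> omega

lemma excPerm_apply (k : ℕ) (i : Fin (k + k)) :
    ((excPerm k) i : ℕ) = if (i : ℕ) < k then 2 * (i : ℕ) + 1 else 2 * ((i : ℕ) - k) := rfl

lemma excPerm_isSimple {k : ℕ} (hk : 2 ≤ k) : IsSimple (excPerm k) := by
  intro s hs
  by_contra hcon
  push_neg at hcon
  obtain ⟨hcard, hne⟩ := hcon
  have hcard2 : 1 < s.card := by omega
  obtain ⟨a, ha, b, hb, hab⟩ := Finset.one_lt_card.mp hcard2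
  -- wlog a < b
  obtain ⟨a, b, ha, hb, haltb⟩ : ∃ a b : Fin (k + k), a ∈ s ∧ b ∈ s ∧ (a : ℕ) < (b : ℕ) := by
    rcases lt_or_gt_of_ne hab with h | h
    · exact ⟨a, b, ha, hb, h⟩
    · exact ⟨b, a, hb, ha, h⟩
  -- step 1 : there is a low position in s
  have hlow : ∃ x ∈ s, (x : ℕ) < k := by
    by_contra hall
    push_neg at hall
    have hak : k ≤ (a : ℕ) := hall a ha
    have hbk : k ≤ (b : ℕ) := hall b hb
    have hmidb : 2 * ((a : ℕ) - k) + 1 < k + k := by have := b.isLt; omega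
    have hmid : (⟨2 * ((a : ℕ) - k) + 1, hmidb⟩ : Fin (k + k)) ∈ s.image (excPerm k) := by
      apply hs.2 (Finset.mem_image_of_mem _ ha) (Finset.mem_image_of_mem _ hb)
      · rw [Fin.le_def]
        simp only [excPerm_apply, if_neg (by omega : ¬ (a : ℕ) < k)]
        omega
      · rw [Fin.le_def]
        simp only [excPerm_apply, if_neg (by omega : ¬ (b : ℕ) < k)]
        omega
    obtain ⟨x, hx, hxe⟩ := Finset.mem_image.mp hmid
    have hxv : ((excPerm k) x : ℕ) = 2 * ((a : ℕ) - k) + 1 := by rw [hxe]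
    rw [excPerm_apply] at hxv
    have hxk := hall x hx
    rw [if_neg (by omega)] at hxv
    omega
  -- step 2 : there is a high position in s
  have hhigh : ∃ y ∈ s, k ≤ (y : ℕ) := by
    by_contra hall
    push_neg at hall
    have hak : (a : ℕ) < k := hall a ha
    have hbk : (b : ℕ) < k := hall b hb
    have hmidb : 2 * (a : ℕ) + 2 < k + k := by omega
    have hmid : (⟨2 * (a : ℕ) + 2, hmidb⟩ : Fin (k + k)) ∈ s.image (excPerm k) := by
      apply hs.2 (Finset.mem_image_of_mem _ ha) (Finset.mem_image_of_mem _ hb)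
      · rw [Fin.le_def]
        simp only [excPerm_apply, if_pos hak]
        omega
      · rw [Fin.le_def]
        simp only [excPerm_apply, if_pos hbk]
        omega
    obtain ⟨x, hx, hxe⟩ := Finset.mem_image.mp hmid
    have hxv : ((excPerm k) x : ℕ) = 2 * (a : ℕ) + 2 := by rw [hxe]
    rw [excPerm_apply] at hxv
    have hxk := hall x hx
    rw [if_pos hxk] at hxv
    omega
  obtain ⟨x, hx, hxk⟩ := hlow
  obtain ⟨y, hy, hyk⟩ := hhigh
  -- positions k-1 and k belong to s
  have hk1 : (⟨k - 1, by omega⟩ : Fin (k + k)) ∈ s := by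
    apply hs.1 hx hy <;> rw [Fin.le_def] <;> simp <;> omega
  have hk0 : (⟨k, by omega⟩ : Fin (k + k)) ∈ s := by
    apply hs.1 hx hy <;> rw [Fin.le_def] <;> simp <;> omega
  -- their values are the extremes
  have hvmax : ((excPerm k) ⟨k - 1, by omega⟩ : ℕ) = 2 * k - 1 := by
    rw [excPerm_apply]; simp only; rw [if_pos (by omega : k - 1 < k)]; omega
  have hvmin : ((excPerm k) ⟨k, by omega⟩ : ℕ) = 0 := by
    rw [excPerm_apply]; simp only; rw [if_neg (by omega : ¬ k < k)]; omega
  -- every position belongs to s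
  apply hne
  apply Finset.eq_univ_iff_forall.mpr
  intro z
  have hz : (excPerm k) z ∈ s.image (excPerm k) := by
    apply hs.2 (Finset.mem_image_of_mem _ hk0) (Finset.mem_image_of_mem _ hk1)
    · rw [Fin.le_def, hvmin]; omega
    · rw [Fin.le_def, hvmax]; have := ((excPerm k) z).isLt; omega
  obtain ⟨w, hw, hwe⟩ := Finset.mem_image.mp hz
  rwa [← (excPerm k).injective hwe]

lemma type0_even {M n : ℕ} (hM : 2 ≤ M) (hn : n = 2 * M) (σ : Equiv.Perm (Fin n))
    (hσ : ∀ i : Fin n, (σ i : ℕ) = exceptionalValue 0 M (i : ℕ))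
    (k : ℕ) (hk2 : 2 ≤ k) (hkM : k ≤ M) :
    ∃ π : Equiv.Perm (Fin (k + k)), IsSimple π ∧ IsPattern π σ := by
  refine ⟨excPerm k, excPerm_isSimple hk2, ?_⟩
  have hbound : ∀ i : Fin (k + k),
      (if (i : ℕ) < k then (i : ℕ) else M + ((i : ℕ) - k)) < n := by
    intro i; have := i.isLt; split <;> omega
  refine ⟨OrderEmbedding.ofStrictMono
    (fun i => ⟨if (i : ℕ) < k then (i : ℕ) else M + ((i : ℕ) - k), hbound i⟩) ?_, ?_⟩
  · intro i j hij
    rw [Fin.lt_def] at hij ⊢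
    simp only
    split_ifs <;> omega
  · intro i j
    have hval : ∀ i : Fin (k + k),
        ((σ ⟨if (i : ℕ) < k then (i : ℕ) else M + ((i : ℕ) - k), hbound i⟩ : Fin n) : ℕ)
          = ((excPerm k) i : ℕ) := by
      intro x
      rw [hσ, excPerm_apply, eV0_eq]
      simp only
      have := x.isLt
      split_ifs <;> omega
    show excPerm k i < excPerm k j ↔
      σ ⟨if (i : ℕ) < k then (i : ℕ) else M + ((i : ℕ) - k), hbound i⟩ <
      σ ⟨if (j : ℕ) < k then (j : ℕ) else M + ((j : ℕ) - k), hbound j⟩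
    rw [Fin.lt_def, Fin.lt_def, hval i, hval j]

-- ===================== type-0 has no odd simple pattern =====================

lemma card_filter_val_lt (m c : ℕ) (hc : c ≤ m) :
    (Finset.univ.filter (fun x : Fin m => (x : ℕ) < c)).card = c := by
  have himg : (Finset.univ.filter (fun x : Fin m => (x : ℕ) < c)).image Fin.val
      = Finset.range c := by
    ext a
    simp only [Finset.mem_image, Finset.mem_filter, Finset.mem_univ, true_and, Finset.mem_range]
    constructor
    · rintro ⟨x, hx, rfl⟩; exact hx
    · intro ha; exact ⟨⟨a, lt_of_lt_of_le ha hc⟩, ha, rfl⟩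
  calc (Finset.univ.filter (fun x : Fin m => (x : ℕ) < c)).card
      = ((Finset.univ.filter (fun x : Fin m => (x : ℕ) < c)).image Fin.val).card :=
        (Finset.card_image_of_injective _ Fin.val_injective).symm
    _ = (Finset.range c).card := by rw [himg]
    _ = c := Finset.card_range c

lemma type0_odd {M n m : ℕ} (hM : 2 ≤ M) (hn : n = 2 * M) (σ : Equiv.Perm (Fin n))
    (hσ : ∀ i : Fin n, (σ i : ℕ) = exceptionalValue 0 M (i : ℕ))
    (hm3 : 3 ≤ m) (hodd : m % 2 = 1)
    (π : Equiv.Perm (Fin m)) (hsimp : IsSimple π) (hpat : IsPattern π σ) : False := by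
  obtain ⟨f, hf⟩ := hpat
  obtain ⟨F, hF⟩ : ∃ F : ℕ → ℕ, ∀ (i : ℕ) (h : i < m), F i = (f ⟨i, h⟩ : ℕ) :=
    ⟨fun i => if h : i < m then (f ⟨i, h⟩ : ℕ) else 0, fun i h => by exact dif_pos h⟩
  have hFl : ∀ l : Fin m, F (l : ℕ) = (f l : ℕ) := by
    intro l
    rw [hF (l : ℕ) l.isLt]
  have hFmono : ∀ a b : ℕ, b < m → a < b → F a < F b := by
    intro a b hb hab
    rw [hF a (by omega), hF b hb]
    exact Fin.lt_def.mp (f.strictMono (by rw [Fin.lt_def]; exact hab))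
  have hFrefl : ∀ a b : ℕ, a < m → b < m → F a < F b → a < b := by
    intro a b ha hb hab
    by_contra hc
    push_neg at hc
    rcases eq_or_lt_of_le hc with rfl | h
    · omega
    · have := hFmono b a ha h; omega
  obtain ⟨v, hv⟩ : ∃ v : ℕ → ℕ, ∀ a, v a = if F a < M then 2 * F a + 1 else 2 * (F a - M) :=
    ⟨_, fun _ => rfl⟩
  have hπv : ∀ l l' : Fin m, (π l < π l' ↔ v (l : ℕ) < v (l' : ℕ)) := by
    intro l l'
    rw [hf l l', Fin.lt_def, hσ, hσ, eV0_eq, eV0_eq, hv (l : ℕ), hv (l' : ℕ), hFl, hFl]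
  obtain ⟨p, hpdef⟩ :
      ∃ p, p = (Finset.univ.filter (fun l : Fin m => (f l : ℕ) < M)).card := ⟨_, rfl⟩
  have hpm : p ≤ m := by
    rw [hpdef]
    calc (Finset.univ.filter (fun l : Fin m => (f l : ℕ) < M)).card
        ≤ (Finset.univ : Finset (Fin m)).card := Finset.card_le_card (Finset.subset_univ _)
      _ = m := by rw [Finset.card_univ, Fintype.card_fin]
  have hdown : ∀ l l' : Fin m, l' ≤ l → (f l : ℕ) < M → (f l' : ℕ) < M := by
    intro l l' hle hl
    rcases eq_or_lt_of_le hle with rfl | hlt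
    · exact hl
    · exact lt_trans (Fin.lt_def.mp (f.strictMono hlt)) hl
  have hp : ∀ a : ℕ, a < m → (F a < M ↔ a < p) := by
    intro a ha
    rw [hF a ha, hpdef]
    constructor
    · intro hlow
      by_contra hge
      push_neg at hge
      have hsub : Finset.univ.filter (fun x : Fin m => (x : ℕ) < a + 1)
          ⊆ Finset.univ.filter (fun l : Fin m => (f l : ℕ) < M) := by
        intro x hx
        rw [Finset.mem_filter] at hx ⊢
        have hx2 := hx.2
        exact ⟨Finset.mem_univ _,
          hdown ⟨a, ha⟩ x (Fin.le_def.mpr (show (x : ℕ) ≤ a by omega)) hlow⟩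
      have hcc := Finset.card_le_card hsub
      rw [card_filter_val_lt m (a + 1) (by omega)] at hcc
      omega
    · intro hap
      by_contra hnl
      push_neg at hnl
      have hsub : Finset.univ.filter (fun l : Fin m => (f l : ℕ) < M)
          ⊆ Finset.univ.filter (fun x : Fin m => (x : ℕ) < a) := by
        intro x hx
        rw [Finset.mem_filter] at hx ⊢
        refine ⟨Finset.mem_univ _, ?_⟩
        by_contra hxa
        push_neg at hxa
        have := hdown x ⟨a, ha⟩ (Fin.le_def.mpr (show a ≤ (x : ℕ) from hxa)) hx.2
        omega
      have hcc := Finset.card_le_card hsub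
      rw [card_filter_val_lt m a (by omega)] at hcc
      omega
  -- witness for adjacent low pairs
  have witA : ∀ a : ℕ, a + 1 < m → F a < M → F (a + 1) < M →
      ∃ b, b < m ∧ M ≤ F b ∧ F a + M < F b ∧ F b ≤ F (a + 1) + M := by
    intro a ham hla hla'
    by_contra hno
    push_neg at hno
    refine pair_not_simple hm3 π ⟨a, by omega⟩ ⟨a + 1, ham⟩ rfl ?_ ?_ hsimp
    · rw [hπv]
      show v a < v (a + 1)
      rw [hv a, hv (a + 1), if_pos hla, if_pos hla']
      have := hFmono a (a + 1) ham (by omega)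
      omega
    · intro x h1 h2
      rw [hπv] at h1 h2
      have h1' : v a < v (x : ℕ) := h1
      have h2' : v (x : ℕ) < v (a + 1) := h2
      rw [hv a, hv (x : ℕ), if_pos hla] at h1'
      rw [hv (x : ℕ), hv (a + 1), if_pos hla'] at h2'
      by_cases hx : F (x : ℕ) < M
      · rw [if_pos hx] at h1' h2'
        have ha1 := hFrefl a (x : ℕ) (by omega) x.isLt (by omega)
        have ha2 := hFrefl (x : ℕ) (a + 1) x.isLt ham (by omega)
        omega
      · rw [if_neg hx] at h1' h2'
        push_neg at hx
        have := hno (x : ℕ) x.isLt hx (by omega)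
        omega
  -- witness for adjacent high pairs
  have witB : ∀ a : ℕ, a + 1 < m → M ≤ F a → M ≤ F (a + 1) →
      ∃ b, b < m ∧ F b < M ∧ F a ≤ F b + M ∧ F b + M < F (a + 1) := by
    intro a ham hha hha'
    by_contra hno
    push_neg at hno
    refine pair_not_simple hm3 π ⟨a, by omega⟩ ⟨a + 1, ham⟩ rfl ?_ ?_ hsimp
    · rw [hπv]
      show v a < v (a + 1)
      rw [hv a, hv (a + 1), if_neg (by omega), if_neg (by omega)]
      have := hFmono a (a + 1) ham (by omega)
      omega
    · intro x h1 h2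
      rw [hπv] at h1 h2
      have h1' : v a < v (x : ℕ) := h1
      have h2' : v (x : ℕ) < v (a + 1) := h2
      rw [hv a, hv (x : ℕ), if_neg (show ¬ (F a < M) by omega)] at h1'
      rw [hv (x : ℕ), hv (a + 1), if_neg (show ¬ (F (a + 1) < M) by omega)] at h2'
      by_cases hx : F (x : ℕ) < M
      · rw [if_pos hx] at h1' h2'
        have := hno (x : ℕ) x.isLt hx (by omega)
        omega
      · rw [if_neg hx] at h1' h2'
        push_neg at hx
        have ha1 := hFrefl a (x : ℕ) (by omega) x.isLt (by omega)
        have ha2 := hFrefl (x : ℕ) (a + 1) x.isLt ham (by omega)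
        omega
  -- p ≥ 1
  have hp1 : 1 ≤ p := by
    by_contra h0
    push_neg at h0
    have hh0 : M ≤ F 0 := by
      have hc : ¬ (F 0 < M) := fun hc => by have := (hp 0 (by omega)).mp hc; omega
      omega
    have hh1 : M ≤ F 1 := by
      have hc : ¬ (F 1 < M) := fun hc => by have := (hp 1 (by omega)).mp hc; omega
      omega
    obtain ⟨b, hb, hbl, -, -⟩ := witB 0 (by omega) hh0 hh1
    have := (hp b hb).mp hbl
    omega
  -- p < m
  have hpm' : p < m := by
    by_contra hpM
    push_neg at hpM
    have hl0 : F 0 < M := (hp 0 (by omega)).mpr (by omega)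
    have hl1 : F 1 < M := (hp 1 (by omega)).mpr (by omega)
    obtain ⟨b, hb, hbh, -, -⟩ := witA 0 (by omega) hl0 hl1
    have : ¬ (F b < M) := by omega
    rw [hp b hb] at this
    omega
  -- minimal witness
  have witMin : ∃ b, b < m ∧ M ≤ F b ∧ F b ≤ F 0 + M := by
    by_contra hno
    push_neg at hno
    refine min_not_simple hm3 π ⟨0, by omega⟩ rfl ?_ hsimp
    intro x
    rcases Nat.eq_zero_or_pos (x : ℕ) with hx0 | hx0
    · have hxz : x = ⟨0, by omega⟩ := Fin.ext hx0
      rw [hxz]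
    · apply le_of_lt
      rw [hπv]
      show v 0 < v (x : ℕ)
      have h0low : F 0 < M := (hp 0 (by omega)).mpr (by omega)
      rw [hv 0, hv (x : ℕ), if_pos h0low]
      by_cases hx : F (x : ℕ) < M
      · rw [if_pos hx]
        have := hFmono 0 (x : ℕ) x.isLt hx0
        omega
      · rw [if_neg hx]
        have := hno (x : ℕ) x.isLt (by omega)
        omega
  -- maximal witness
  have witMax : ∃ b, b < m ∧ F b < M ∧ F (m - 1) ≤ F b + M := by
    by_contra hno
    push_neg at hno
    refine max_not_simple hm3 π ⟨m - 1, by omega⟩ (show m - 1 + 1 = m by omega) ?_ hsimp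
    intro x
    rcases eq_or_ne (x : ℕ) (m - 1) with hx1 | hx1
    · have hxz : x = ⟨m - 1, by omega⟩ := Fin.ext hx1
      rw [hxz]
    · apply le_of_lt
      rw [hπv]
      show v (x : ℕ) < v (m - 1)
      have hzhigh : ¬ (F (m - 1) < M) := fun hc => by
        have := (hp (m - 1) (by omega)).mp hc; omega
      rw [hv (x : ℕ), hv (m - 1), if_neg hzhigh]
      by_cases hx : F (x : ℕ) < M
      · rw [if_pos hx]
        have := hno (x : ℕ) x.isLt hx
        omega
      · rw [if_neg hx]
        have hxlt := x.isLt
        have := hFmono (x : ℕ) (m - 1) (by omega) (by omega)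
        omega
  -- first induction : 2 * p ≤ m
  have key1 : ∀ i : ℕ, i < p → ∃ b, b < m ∧ M ≤ F b ∧ F b ≤ F i + M ∧ p + i ≤ b := by
    intro i
    induction i with
    | zero =>
      intro hip
      obtain ⟨b, hb, hb1, hb2⟩ := witMin
      refine ⟨b, hb, hb1, hb2, ?_⟩
      have hc : ¬ (b < p) := fun hc => by have := (hp b hb).mpr hc; omega
      omega
    | succ i ih =>
      intro hip
      obtain ⟨b, hb, hb1, hb2, hb3⟩ := ih (by omega)
      have hl1 : F i < M := (hp i (by omega)).mpr (by omega)
      have hl2 : F (i + 1) < M := (hp (i + 1) (by omega)).mpr (by omega)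
      obtain ⟨b', hb', hb'1, hb'2, hb'3⟩ := witA i (by omega) hl1 hl2
      refine ⟨b', hb', hb'1, hb'3, ?_⟩
      have := hFrefl b b' hb hb' (by omega)
      omega
  -- second induction : m ≤ 2 * p
  have key2 : ∀ i : ℕ, i < m - p →
      ∃ b, b < m ∧ F b < M ∧ F (m - 1 - i) ≤ F b + M ∧ b + i < p := by
    intro i
    induction i with
    | zero =>
      intro hiq
      obtain ⟨b, hb, hb1, hb2⟩ := witMax
      exact ⟨b, hb, hb1, hb2, by have := (hp b hb).mp hb1; omega⟩
    | succ i ih =>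
      intro hiq
      obtain ⟨b, hb, hb1, hb2, hb3⟩ := ih (by omega)
      have hrw : m - 1 - (i + 1) + 1 = m - 1 - i := by omega
      have hh1 : M ≤ F (m - 1 - (i + 1)) := by
        have hc : ¬ (F (m - 1 - (i + 1)) < M) := fun hc => by
          have := (hp (m - 1 - (i + 1)) (by omega)).mp hc; omega
        omega
      have hh2 : M ≤ F (m - 1 - (i + 1) + 1) := by
        rw [hrw]
        have hc : ¬ (F (m - 1 - i) < M) := fun hc => by
          have := (hp (m - 1 - i) (by omega)).mp hc; omega
        omega
      obtain ⟨b', hb', hb'1, hb'2, hb'3⟩ := witB (m - 1 - (i + 1)) (by omega) hh1 hh2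
      rw [hrw] at hb'3
      refine ⟨b', hb', hb'1, hb'2, ?_⟩
      have := hFrefl b' b hb' hb (by omega)
      omega
  obtain ⟨b1, hb1m, -, -, hb1c⟩ := key1 (p - 1) (by omega)
  obtain ⟨b2, -, -, -, hb2c⟩ := key2 (m - p - 1) (by omega)
  omega

/-- An exceptional permutation `σ` has a simple pattern of size `m`
(for `3 ≤ m ≤ |σ|`) iff `m` is even. -/
theorem exceptional_simple_pattern_iff_even {n : ℕ} (σ : Equiv.Perm (Fin n))
    (hσ : IsExceptional σ) (m : ℕ) (h3 : 3 ≤ m) (hm : m ≤ n) :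
    (∃ π : Equiv.Perm (Fin m), IsSimple π ∧ IsPattern π σ) ↔ Even m := by
  obtain ⟨σ', hσ'0, hiff⟩ := exists_type0 hσ m
  rw [hiff]
  obtain ⟨M, hM, hn, hval⟩ := hσ'0
  constructor
  · rintro ⟨π, hs, hp⟩
    by_contra hodd
    have hodd' : m % 2 = 1 := Nat.odd_iff.mp (Nat.not_even_iff_odd.mp hodd)
    exact type0_odd hM hn σ' hval h3 hodd' π hs hp
  · intro heven
    obtain ⟨k, rfl⟩ := heven
    exact type0_even hM hn σ' hval k (by omega) (by omega)
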